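/- More generally, if X is a closed subspace of a normed space Y, then every extreme point of the closed unit ball of X* is the restriction to X of some extreme point of the closed unit ball of Y*. -/

import Mathlib

open Filter Topology

noncomputable section

set_option maxHeartbeats 1000000
set_option synthInstance.maxHeartbeats 200000

/-- helper: membership in the unit ball iff norm at most one. -/
theorem stmt2_mem_ball_iff {E : Type*} [SeminormedAddCommGroup E] (x : E) :
    x ∈ Metric.closedBall (0 : E) 1 ↔ ‖x‖ ≤ 1 :=
  mem_closedBall_zero_iff (a := x)

/-- if `X` is a closed subspace of a normed space `Y`, then every extreme
point of the closed unit ball of `X*` is the restriction to `X` of some extreme point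
of the closed unit ball of `Y*`. -/
theorem stmt2 (Y : Type*) [NormedAddCommGroup Y] [NormedSpace ℝ Y]
    (X : Submodule ℝ Y) (hX : IsClosed (X : Set Y))
    (f : X →L[ℝ] ℝ)
    (hf : f ∈ Set.extremePoints ℝ (Metric.closedBall (0 : X →L[ℝ] ℝ) 1)) :
    ∃ g : Y →L[ℝ] ℝ, g ∈ Set.extremePoints ℝ (Metric.closedBall (0 : Y →L[ℝ] ℝ) 1) ∧
      f = g.comp X.subtypeL := by
  have hfnorm : ‖f‖ ≤ 1 := by
    have := hf.1
    exact (stmt2_mem_ball_iff f).mp this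
  -- The set of norm-≤1 extensions of f, in the weak* topology
  set F : Set (WeakDual ℝ Y) :=
    {g | ‖WeakDual.toStrongDual g‖ ≤ 1 ∧ ∀ x : X, g (x : Y) = f x} with hF
  -- F is nonempty by Hahn-Banach
  obtain ⟨g₀, hg₀ext, hg₀norm⟩ := exists_extension_norm_eq X f
  have hFne : F.Nonempty := ⟨g₀, by rw [hF]; exact ⟨by rw [show ‖WeakDual.toStrongDual g₀‖ = ‖g₀‖ from rfl, hg₀norm]; exact hfnorm, hg₀ext⟩⟩
  -- F is convex
  have hFconv : Convex ℝ F := by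
    rintro g₁ ⟨hg₁, hg₁x⟩ g₂ ⟨hg₂, hg₂x⟩ a b ha hb hab
    constructor
    · show ‖WeakDual.toStrongDual (a • g₁ + b • g₂)‖ ≤ 1
      have : WeakDual.toStrongDual (a • g₁ + b • g₂) =
          a • WeakDual.toStrongDual g₁ + b • WeakDual.toStrongDual g₂ := rfl
      rw [this]
      calc ‖a • WeakDual.toStrongDual g₁ + b • WeakDual.toStrongDual g₂‖
          ≤ ‖a • WeakDual.toStrongDual g₁‖ + ‖b • WeakDual.toStrongDual g₂‖ := norm_add_le _ _
        _ ≤ a * 1 + b * 1 := by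
            rw [norm_smul, norm_smul, Real.norm_eq_abs, Real.norm_eq_abs,
              abs_of_nonneg ha, abs_of_nonneg hb]
            exact add_le_add (by nlinarith) (by nlinarith)
        _ = 1 := by linarith
    · intro x
      have : (a • g₁ + b • g₂) (x : Y) = a * g₁ (x : Y) + b * g₂ (x : Y) := rfl
      rw [this, hg₁x x, hg₂x x]
      linear_combination f x * hab
  -- F is compact (Banach-Alaoglu + closedness)
  have hFclosed : IsClosed F := by
    have h1 : IsClosed {g : WeakDual ℝ Y | ‖WeakDual.toStrongDual g‖ ≤ 1} := by
      have := WeakDual.isClosed_closedBall (𝕜 := ℝ) (E := Y) 0 1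
      convert this using 1
      ext g
      exact (stmt2_mem_ball_iff (WeakDual.toStrongDual g)).symm
    have h2 : IsClosed {g : WeakDual ℝ Y | ∀ x : X, g (x : Y) = f x} := by
      have heq : {g : WeakDual ℝ Y | ∀ x : X, g (x : Y) = f x} =
          ⋂ x : X, {g : WeakDual ℝ Y | g (x : Y) = f x} := by
        ext g; simp
      rw [heq]
      exact isClosed_iInter fun x =>
        isClosed_eq (WeakDual.eval_continuous (x : Y)) continuous_const
    exact h1.inter h2
  have hFcomp : IsCompact F := by
    have hball := WeakDual.isCompact_closedBall (𝕜 := ℝ) (E := Y) 0 1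
    refine hball.of_isClosed_subset hFclosed ?_
    rintro g ⟨hg, -⟩
    exact (stmt2_mem_ball_iff _).mpr hg
  -- Krein-Milman: F has an extreme point
  have : LocallyConvexSpace ℝ (WeakDual ℝ Y) := WeakBilin.locallyConvexSpace
  obtain ⟨gw, hgwF, hgwext⟩ := hFcomp.extremePoints_nonempty hFne
  obtain ⟨hgwnorm, hgwx⟩ := hgwF
  set g : Y →L[ℝ] ℝ := WeakDual.toStrongDual gw with hg
  have hcomp : g.comp X.subtypeL = f := by
    ext x; exact hgwx x
  refine ⟨g, mem_extremePoints.mpr ⟨?_, ?_⟩, hcomp.symm⟩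
  · exact (stmt2_mem_ball_iff g).mpr hgwnorm
  · intro g₁ hg₁ g₂ hg₂ hseg
    replace hg₁ := (stmt2_mem_ball_iff g₁).mp hg₁
    replace hg₂ := (stmt2_mem_ball_iff g₂).mp hg₂
    obtain ⟨a, b, ha, hb, hab, heq⟩ := hseg
    -- restrictions
    set f₁ := g₁.comp X.subtypeL with hf₁
    set f₂ := g₂.comp X.subtypeL with hf₂
    have hres : ∀ (h : Y →L[ℝ] ℝ), ‖h‖ ≤ 1 → ‖h.comp X.subtypeL‖ ≤ 1 := by
      intro h hh
      refine ContinuousLinearMap.opNorm_le_bound _ zero_le_one fun x => ?_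
      calc ‖h (x : Y)‖ ≤ ‖h‖ * ‖(x : Y)‖ := h.le_opNorm _
        _ ≤ 1 * ‖x‖ := by
            rw [Submodule.norm_coe]
            exact mul_le_mul_of_nonneg_right hh (norm_nonneg _)
    have hf₁mem : f₁ ∈ Metric.closedBall (0 : X →L[ℝ] ℝ) 1 := by
      exact (stmt2_mem_ball_iff f₁).mpr (hres g₁ hg₁)
    have hf₂mem : f₂ ∈ Metric.closedBall (0 : X →L[ℝ] ℝ) 1 := by
      exact (stmt2_mem_ball_iff f₂).mpr (hres g₂ hg₂)
    have hfseg : f ∈ openSegment ℝ f₁ f₂ := by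
      refine ⟨a, b, ha, hb, hab, ?_⟩
      rw [hf₁, hf₂, ← hcomp, ← heq]
      ext x
      rfl
    obtain ⟨he₁, he₂⟩ := (mem_extremePoints.mp hf).2 _ hf₁mem _ hf₂mem hfseg
    -- g₁, g₂ ∈ F
    have hg₁F : (g₁ : WeakDual ℝ Y) ∈ F := by
      refine ⟨hg₁, fun x => ?_⟩
      exact DFunLike.congr_fun he₁ x
    have hg₂F : (g₂ : WeakDual ℝ Y) ∈ F := by
      refine ⟨hg₂, fun x => ?_⟩
      exact DFunLike.congr_fun he₂ x
    have hwseg : gw ∈ openSegment ℝ (g₁ : WeakDual ℝ Y) (g₂ : WeakDual ℝ Y) :=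
      ⟨a, b, ha, hb, hab, heq⟩
    obtain ⟨hw₁, hw₂⟩ := (mem_extremePoints.mp (show gw ∈ F.extremePoints ℝ from ⟨⟨hgwnorm, hgwx⟩, hgwext⟩)).2 _ hg₁F _ hg₂F hwseg
    constructor
    · ext y; exact DFunLike.congr_fun hw₁ y
    · ext y; exact DFunLike.congr_fun hw₂ y
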